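/- Let θ^k be the exponential distribution with parameter λ_k > 0 (density s ↦ λ_k e^{−λ_k s} on [0,∞)) for each k. Then the sequence (θ^k) satisfies the long-term condition if and only if λ_k → 0 as k → ∞. -/

import Mathlib

open MeasureTheory Set Filter

/-- The `s`-total variation of a Borel measure `θ` on `[0,∞)`:
`TV_s(θ) = sup_{Q Borel ⊆ [0,∞)} |θ(Q) - θ(Q+s)|`. -/
noncomputable def TV (θ : Measure ℝ) (s : ℝ) : ℝ :=
  ⨆ Q : {Q : Set ℝ // MeasurableSet Q ∧ Q ⊆ Ici 0},
    |(θ Q.1).toReal - (θ ((fun x => x + s) '' Q.1)).toReal|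

/-- The long-term condition for a sequence of measures on `[0,∞)`. -/
def LTC (θ : ℕ → Measure ℝ) : Prop :=
  ∀ S > (0:ℝ), Tendsto (fun k => ⨆ s : Icc (0:ℝ) S, TV (θ k) s) atTop (nhds 0)

open ProbabilityTheory Real

lemma dens_eq (r : ℝ) :
    (fun t => ENNReal.ofReal (if 0 ≤ t then r * Real.exp (-r * t) else 0))
      = exponentialPDF r := by
  funext t
  rw [exponentialPDF_eq, neg_mul]

lemma expθ_univ {r : ℝ} (hr : 0 < r) :
    (volume.withDensity (exponentialPDF r)) univ = 1 := by
  rw [withDensity_apply _ MeasurableSet.univ, Measure.restrict_univ]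
  exact lintegral_exponentialPDF_eq_one hr

lemma expθ_Ici {r : ℝ} (hr : 0 < r) :
    (volume.withDensity (exponentialPDF r)) (Ici 0) = 1 := by
  have h0 : (volume.withDensity (exponentialPDF r)) (Iio 0) = 0 := by
    rw [withDensity_apply _ measurableSet_Iio]
    exact lintegral_exponentialPDF_of_nonpos le_rfl
  have := measure_add_measure_compl (μ := volume.withDensity (exponentialPDF r))
    (measurableSet_Ici (a := (0:ℝ)))
  rw [compl_Ici, h0, add_zero, expθ_univ hr] at this
  exact this

lemma measurable_expPDF (r : ℝ) : Measurable (exponentialPDF r) := by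
  have : exponentialPDF r = fun x => ENNReal.ofReal (exponentialPDFReal r x) := rfl
  rw [this]
  exact (measurable_exponentialPDFReal r).ennreal_ofReal

lemma expθ_shift {r : ℝ} (hr : 0 < r) {s : ℝ} (hs : 0 ≤ s) {Q : Set ℝ}
    (hQ : MeasurableSet Q) (hQ0 : Q ⊆ Ici 0) :
    (volume.withDensity (exponentialPDF r)) ((fun x => x + s) '' Q)
      = ENNReal.ofReal (Real.exp (-(r * s))) * (volume.withDensity (exponentialPDF r)) Q := by
  have himg : (fun x => x + s) '' Q = (fun x => x - s) ⁻¹' Q := by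
    ext x
    simp only [mem_image, mem_preimage]
    constructor
    · rintro ⟨y, hy, rfl⟩; simpa using hy
    · intro h; exact ⟨x - s, h, by ring⟩
  have hA : MeasurableSet ((fun x => x + s) '' Q) := by
    rw [himg]; exact (measurable_sub_const s) hQ
  rw [withDensity_apply _ hA, withDensity_apply _ hQ]
  have hmap : Measure.map (fun x => x + s) (volume : Measure ℝ) = volume :=
    map_add_right_eq_self volume s
  have h1 : ∫⁻ y in (fun x => x + s) '' Q, exponentialPDF r y ∂volume
      = ∫⁻ x in Q, exponentialPDF r (x + s) ∂volume := by
    conv_lhs => rw [← hmap]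
    rw [setLIntegral_map hA (measurable_expPDF r) (measurable_add_const s),
      Set.preimage_image_eq Q (add_left_injective s)]
  rw [h1]
  have h2 : ∫⁻ x in Q, exponentialPDF r (x + s) ∂volume
      = ∫⁻ x in Q, ENNReal.ofReal (Real.exp (-(r * s))) * exponentialPDF r x ∂volume := by
    apply setLIntegral_congr_fun hQ
    intro x hx
    beta_reduce
    have hx0 : (0:ℝ) ≤ x := hQ0 hx
    rw [exponentialPDF_of_nonneg (by linarith), exponentialPDF_of_nonneg hx0,
      ← ENNReal.ofReal_mul (Real.exp_nonneg _)]
    rw [show -(r * (x + s)) = -(r * s) + -(r * x) by ring, Real.exp_add]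
    ring_nf
  rw [h2, lintegral_const_mul _ (measurable_expPDF r)]

lemma TV_exp {r : ℝ} (hr : 0 < r) {s : ℝ} (hs : 0 ≤ s) :
    TV (volume.withDensity (exponentialPDF r)) s = 1 - Real.exp (-(r * s)) := by
  set θ := volume.withDensity (exponentialPDF r) with hθdef
  set e := Real.exp (-(r * s)) with he
  have he0 : 0 < e := Real.exp_pos _
  have he1 : e ≤ 1 := Real.exp_le_one_iff.mpr (by nlinarith)
  have hval : ∀ Q : {Q : Set ℝ // MeasurableSet Q ∧ Q ⊆ Ici 0},
      |(θ Q.1).toReal - (θ ((fun x => x + s) '' Q.1)).toReal|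
        = (1 - e) * (θ Q.1).toReal := by
    intro Q
    rw [expθ_shift hr hs Q.2.1 Q.2.2, ENNReal.toReal_mul, ENNReal.toReal_ofReal he0.le]
    have hQnn : 0 ≤ (θ Q.1).toReal := ENNReal.toReal_nonneg
    rw [abs_of_nonneg (by nlinarith)]
    ring
  have hle1 : ∀ Q : {Q : Set ℝ // MeasurableSet Q ∧ Q ⊆ Ici 0},
      |(θ Q.1).toReal - (θ ((fun x => x + s) '' Q.1)).toReal| ≤ 1 - e := by
    intro Q
    rw [hval Q]
    have hfin : θ Q.1 ≤ 1 := by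
      rw [← expθ_univ hr]
      exact measure_mono (subset_univ _)
    have : (θ Q.1).toReal ≤ 1 := by
      have := ENNReal.toReal_mono (by simp) hfin
      simpa using this
    nlinarith [ENNReal.toReal_nonneg (a := θ Q.1)]
  have hbdd : BddAbove (Set.range fun Q : {Q : Set ℝ // MeasurableSet Q ∧ Q ⊆ Ici 0} =>
      |(θ Q.1).toReal - (θ ((fun x => x + s) '' Q.1)).toReal|) := by
    refine ⟨1 - e, ?_⟩
    rintro x ⟨Q, rfl⟩
    exact hle1 Q
  have : Nonempty {Q : Set ℝ // MeasurableSet Q ∧ Q ⊆ Ici 0} :=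
    ⟨⟨∅, MeasurableSet.empty, empty_subset _⟩⟩
  apply le_antisymm
  · exact ciSup_le hle1
  · have := le_ciSup hbdd (⟨Ici 0, measurableSet_Ici, subset_rfl⟩ :
      {Q : Set ℝ // MeasurableSet Q ∧ Q ⊆ Ici 0})
    rw [hval ⟨Ici 0, measurableSet_Ici, subset_rfl⟩] at this
    simp only [show θ (Ici 0) = 1 from expθ_Ici hr, ENNReal.toReal_one, mul_one] at this
    exact this

lemma sup_TV_exp {r : ℝ} (hr : 0 < r) {S : ℝ} (hS : 0 < S) :
    (⨆ s : Icc (0:ℝ) S, TV (volume.withDensity (exponentialPDF r)) s)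
      = 1 - Real.exp (-(r * S)) := by
  have hnonempty : Nonempty (Icc (0:ℝ) S) := ⟨⟨0, le_rfl, hS.le⟩⟩
  have hval : ∀ s : Icc (0:ℝ) S,
      TV (volume.withDensity (exponentialPDF r)) s = 1 - Real.exp (-(r * s)) :=
    fun s => TV_exp hr s.2.1
  have hle : ∀ s : Icc (0:ℝ) S,
      TV (volume.withDensity (exponentialPDF r)) s ≤ 1 - Real.exp (-(r * S)) := by
    intro s
    rw [hval s]
    have : Real.exp (-(r * S)) ≤ Real.exp (-(r * (s : ℝ))) := by
      apply Real.exp_le_exp.mpr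
      nlinarith [s.2.2]
    linarith
  apply le_antisymm
  · exact ciSup_le hle
  · have hbdd : BddAbove (Set.range fun s : Icc (0:ℝ) S =>
        TV (volume.withDensity (exponentialPDF r)) s) := by
      refine ⟨1 - Real.exp (-(r * S)), ?_⟩
      rintro x ⟨s, rfl⟩
      exact hle s
    have := le_ciSup hbdd (⟨S, hS.le, le_rfl⟩ : Icc (0:ℝ) S)
    rwa [hval ⟨S, hS.le, le_rfl⟩] at this

theorem ltc_exponential_iff (l : ℕ → ℝ) (hl : ∀ k, 0 < l k) (θ : ℕ → Measure ℝ)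
    (hθ : ∀ k, θ k = volume.withDensity
      (fun t => ENNReal.ofReal (if 0 ≤ t then l k * Real.exp (-(l k) * t) else 0))) :
    LTC θ ↔ Tendsto l atTop (nhds 0) := by
  have hθ' : ∀ k, θ k = volume.withDensity (exponentialPDF (l k)) := by
    intro k; rw [hθ k, dens_eq]
  have key : ∀ S : ℝ, 0 < S →
      (fun k => ⨆ s : Icc (0:ℝ) S, TV (θ k) s)
        = fun k => 1 - Real.exp (-(l k * S)) := by
    intro S hS
    funext k
    rw [hθ' k, sup_TV_exp (hl k) hS]
  constructor
  · intro h
    have h1 := h 1 one_pos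
    rw [key 1 one_pos] at h1
    have hexp : Tendsto (fun k => Real.exp (-(l k * 1))) atTop (nhds 1) := by
      have := (tendsto_const_nhds (x := (1:ℝ)) (f := atTop)).sub h1
      simpa using this
    have hlog : Tendsto (fun k => Real.log (Real.exp (-(l k * 1)))) atTop (nhds 0) := by
      have := ((Real.continuousAt_log one_ne_zero).tendsto).comp hexp
      simpa [Function.comp_def] using this
    have : Tendsto (fun k => -(l k * 1)) atTop (nhds 0) := by
      simpa [Function.comp_def, Real.log_exp] using hlog
    have := this.neg
    simpa using this
  · intro h
    intro S hS
    rw [key S hS]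
    have h1 : Tendsto (fun k => -(l k * S)) atTop (nhds 0) := by
      simpa using (h.mul_const S).neg
    have h2 : Tendsto (fun k => Real.exp (-(l k * S))) atTop (nhds 1) := by
      have := (Real.continuous_exp.tendsto 0).comp h1
      simpa [Function.comp_def] using this
    have := (tendsto_const_nhds (x := (1:ℝ)) (f := atTop)).sub h2
    simpa using this
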